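/- Let (C, ·) be a propelinear code of length 4n that is also an Hadamard code. Then (C, ·) is a group of order 8n which is not cyclic. -/

import Mathlib

/-- The action of a coordinate permutation `σ` on a binary vector:
`(permAct σ v) i = v (σ⁻¹ i)`. -/
def permAct {m : ℕ} (σ : Equiv.Perm (Fin m)) (v : Fin m → ZMod 2) : Fin m → ZMod 2 :=
  fun i => v (σ.symm i)

/-- The propelinear operation `x · y = x + π_x(y)`. -/
def pmul {m : ℕ} (π : (Fin m → ZMod 2) → Equiv.Perm (Fin m))
    (x y : Fin m → ZMod 2) : Fin m → ZMod 2 :=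
  x + permAct (π x) y

/-- Powers with respect to the propelinear operation. -/
def ppow {m : ℕ} (π : (Fin m → ZMod 2) → Equiv.Perm (Fin m))
    (g : Fin m → ZMod 2) : ℕ → Fin m → ZMod 2
  | 0 => 0
  | k + 1 => pmul π g (ppow π g k)

/-- The all-ones vector. -/
def allOnes (m : ℕ) : Fin m → ZMod 2 := fun _ => 1

/-- The quadratic character of `ZMod 2`, valued in `ℂ`. -/
def chi : ZMod 2 → ℂ := fun x => if x = 0 then 1 else -1

lemma chi_cases : ∀ x : ZMod 2, x = 0 ∨ x = 1 := by decide

lemma chi_zero : chi 0 = 1 := by simp [chi]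

lemma chi_one : chi 1 = -1 := by norm_num [chi]

lemma chi_add (a b : ZMod 2) : chi (a + b) = chi a * chi b := by
  rcases chi_cases a with h | h <;> rcases chi_cases b with h' | h' <;> subst h <;> subst h' <;>
    simp only [add_zero, zero_add, chi_zero, chi_one, one_mul, mul_one,
      show (1 + 1 : ZMod 2) = 0 from by decide] <;> norm_num

lemma chi_mul_self (x : ZMod 2) : chi x * chi x = 1 := by
  rcases chi_cases x with h | h <;> subst h <;> norm_num [chi]

/-- A propelinear code of length `4n` which is also an Hadamard code is a group of
order `8n` which is not cyclic (no element generates all of `C` by taking powers). -/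
theorem stmt_14 (n : ℕ) (hn : 0 < n) (C : Finset (Fin (4*n) → ZMod 2))
    (π : (Fin (4*n) → ZMod 2) → Equiv.Perm (Fin (4*n)))
    (h0 : (0 : Fin (4*n) → ZMod 2) ∈ C) (hu : allOnes (4*n) ∈ C)
    (hcard : C.card = 8*n)
    (hclosed : ∀ x ∈ C, ∀ y ∈ C, pmul π x y ∈ C)
    (hhom : ∀ x ∈ C, ∀ y ∈ C, π (pmul π x y) = π x * π y)
    (hdist : ∀ x ∈ C, ∀ y ∈ C, x ≠ y → x ≠ y + allOnes (4*n) → hammingDist x y = 2*n) :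
    C.card = 8*n ∧ ¬ ∃ g ∈ C, ∀ x ∈ C, ∃ m : ℕ, ppow π g m = x := by
  classical
  refine ⟨hcard, ?_⟩
  rintro ⟨g, hg, hgen⟩
  set τ : Equiv.Perm (Fin (4*n)) := π g with hτdef
  set S : ℕ → Fin (4*n) → ZMod 2 := ppow π g with hSdef
  have hS0 : S 0 = 0 := rfl
  have hSs : ∀ m, S (m+1) = g + permAct τ (S m) := fun _ => rfl
  have hmem : ∀ m, S m ∈ C := by
    intro m
    induction m with
    | zero => exact h0
    | succ k ih => exact hclosed g hg _ ih
  -- basic permAct lemmas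
  have permAct_inj : ∀ (σ : Equiv.Perm (Fin (4*n))) (v w : Fin (4*n) → ZMod 2),
      permAct σ v = permAct σ w → v = w := by
    intro σ v w h
    funext i
    have := congrFun h (σ i)
    simpa [permAct] using this
  have permAct_add : ∀ (σ : Equiv.Perm (Fin (4*n))) (v w : Fin (4*n) → ZMod 2),
      permAct σ (v + w) = permAct σ v + permAct σ w := fun _ _ _ => rfl
  have permAct_comp : ∀ (σ ρ : Equiv.Perm (Fin (4*n))) (v : Fin (4*n) → ZMod 2),
      permAct σ (permAct ρ v) = permAct (σ * ρ) v := by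
    intro σ ρ v
    rfl
  have permAct_one : ∀ v : Fin (4*n) → ZMod 2, permAct 1 v = v := fun _ => rfl
  have permAct_allOnes : ∀ σ : Equiv.Perm (Fin (4*n)), permAct σ (allOnes (4*n)) = allOnes (4*n) :=
    fun _ => rfl
  -- cancellation
  have cancel : ∀ k a b, S (k + a) = S (k + b) → S a = S b := by
    intro k
    induction k with
    | zero => intro a b h; simpa using h
    | succ k ih =>
      intro a b h
      apply ih
      have h' : S ((k+a)+1) = S ((k+b)+1) := by
        rw [show (k+a)+1 = k+1+a by omega, show (k+b)+1 = k+1+b by omega]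
        exact h
      rw [hSs, hSs] at h'
      exact permAct_inj τ _ _ (add_left_cancel h')
  have step0 : ∀ a b, a < b → S a = S b → S (b - a) = 0 := by
    intro a b hab h
    have h1 : S (a + (b - a)) = S (a + 0) := by
      rw [Nat.add_sub_cancel' hab.le, Nat.add_zero]
      exact h.symm
    have := cancel a (b - a) 0 h1
    rw [this, hS0]
  have hex : ∃ q, 0 < q ∧ S q = 0 := by
    obtain ⟨a, ha, b, hb, hne, heq⟩ := Finset.exists_ne_map_eq_of_card_lt_of_maps_to
      (s := Finset.range (8*n+1)) (t := C) (by rw [hcard]; simp) (fun m _ => hmem m)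
    rcases Nat.lt_or_ge a b with h | h
    · exact ⟨b - a, by omega, step0 a b h heq⟩
    · exact ⟨a - b, by omega, step0 b a (by omega) heq.symm⟩
  set p := Nat.find hex with hpdef
  obtain ⟨hppos, hSp⟩ := Nat.find_spec hex
  have hper : ∀ m, S (m + p) = S m := by
    intro m
    induction m with
    | zero => rw [Nat.zero_add, hSp, hS0]
    | succ k ih => rw [show k+1+p = (k+p)+1 by omega, hSs, hSs, ih]
  have hmod : ∀ m, S m = S (m % p) := by
    intro m
    conv_lhs => rw [← Nat.mod_add_div m p]
    generalize m / p = k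
    induction k with
    | zero => simp
    | succ k ih => rw [Nat.mul_succ, ← Nat.add_assoc, show m % p + p * k + p = (m % p + p * k) + p from rfl, hper, ih]
  have hzero_of : ∀ a b, a < b → b < p → S a ≠ S b := by
    intro a b hab hbp h
    have hq0 := step0 a b hab h
    exact Nat.find_min hex (show b - a < p by omega) ⟨by omega, hq0⟩
  have hdistinct : ∀ a b, a < p → b < p → S a = S b → a = b := by
    intro a b ha hb h
    rcases Nat.lt_trichotomy a b with h' | h' | h'
    · exact absurd h (hzero_of a b h' hb)
    · exact h'
    · exact absurd h.symm (hzero_of b a h' ha)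
  have hzero_dvd : ∀ q, S q = 0 → p ∣ q := by
    intro q hq
    have h1 : S (q % p) = 0 := by rw [← hmod]; exact hq
    have h2 : q % p = 0 := by
      by_contra hne
      exact Nat.find_min hex (Nat.mod_lt q hppos) ⟨Nat.pos_of_ne_zero hne, h1⟩
    exact Nat.dvd_of_mod_eq_zero h2
  -- p = 8n
  have hp : p = 8*n := by
    have hinj : Set.InjOn S (Finset.range p : Finset ℕ) := by
      intro a ha b hb h
      exact hdistinct a b (by simpa using ha) (by simpa using hb) h
    have himg : (Finset.range p).image S = C := by
      apply Finset.Subset.antisymm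
      · intro x hx
        obtain ⟨m, _, rfl⟩ := Finset.mem_image.1 hx
        exact hmem m
      · intro x hx
        obtain ⟨m, hm⟩ := hgen x hx
        exact Finset.mem_image.2 ⟨m % p, Finset.mem_range.2 (Nat.mod_lt _ hppos), by rw [← hmod]; exact hm⟩
    have := Finset.card_image_of_injOn hinj
    rw [himg, hcard, Finset.card_range] at this
    omega
  -- additivity
  have hadd : ∀ a b, S (a + b) = S a + permAct (τ ^ a) (S b) := by
    intro a
    induction a with
    | zero =>
      intro b
      rw [pow_zero, permAct_one, hS0, Nat.zero_add, zero_add]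
    | succ k ih =>
      intro b
      rw [show k+1+b = (k+b)+1 by omega, hSs, ih, hSs, permAct_add, permAct_comp, ← pow_succ']
      rw [add_assoc]
  have hn4 : (0:ℕ) < 4*n := by omega
  have hallne : allOnes (4*n) ≠ (0 : Fin (4*n) → ZMod 2) := by
    intro h
    have := congrFun h ⟨0, hn4⟩
    simp [allOnes] at this
  -- S (4n) = allOnes
  have hS4n : S (4*n) = allOnes (4*n) := by
    obtain ⟨m, hm⟩ := hgen _ hu
    have ht : S (m % p) = allOnes (4*n) := by rw [← hmod]; exact hm
    set t := m % p with htdef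
    have htlt : t < p := Nat.mod_lt _ hppos
    have htpos : 0 < t := by
      rcases Nat.eq_zero_or_pos t with h | h
      · rw [h, hS0] at ht; exact absurd ht.symm hallne
      · exact h
    have h2t : S (t + t) = 0 := by
      rw [hadd, ht, permAct_allOnes]
      funext i
      simp [allOnes, show (1 + 1 : ZMod 2) = 0 from by decide]
    obtain ⟨k, hk0⟩ := hzero_dvd _ h2t
    have hk : t + t = 8*n*k := by rw [← hp]; exact hk0
    have htlt' : t < 8*n := by rw [← hp]; exact htlt
    have ht4 : t = 4*n := by
      rcases k with _ | _ | k
      · rw [Nat.mul_zero] at hk; omega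
      · rw [Nat.mul_one] at hk; omega
      · exfalso
        have h2 : 8*n*2 ≤ 8*n*(k+2) := Nat.mul_le_mul_left _ (by omega)
        rw [← hk] at h2
        omega
    have hfin := ht
    rw [ht4] at hfin
    exact hfin
  have hdistinct' : ∀ a b, a < 8*n → b < 8*n → S a = S b → a = b := by
    rw [← hp]; exact hdistinct
  have hS8n : S (8*n) = 0 := by rw [← hp]; exact hSp
  -- weights
  have hwt : ∀ m, m < 8*n → m ≠ 0 → m ≠ 4*n → hammingNorm (S m) = 2*n := by
    intro m hm hm0 hm4
    have h1 : S m ≠ 0 := by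
      intro h
      exact hm0 (hdistinct' m 0 hm (by omega) (by rw [h, hS0]))
    have h2 : S m ≠ allOnes (4*n) := by
      intro h
      exact hm4 (hdistinct' m (4*n) hm (by omega) (by rw [h, hS4n]))
    have := hdist (S m) (hmem m) 0 h0 h1 (by rw [zero_add]; exact h2)
    rw [hammingDist_zero_right] at this
    exact this
  have hwt_g : hammingNorm g = 2*n := by
    have hS1 : S 1 = g := by
      rw [hSs, hS0]
      funext i
      simp [permAct]
    have := hwt 1 (by omega) (by omega) (by omega)
    rw [hS1] at this
    exact this
  -- sum of coordinates of g is zero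
  have hgsum : ∑ i, g i = (0 : ZMod 2) := by
    have h1 : ∑ i, g i = ∑ i ∈ Finset.univ.filter (fun i => g i ≠ 0), g i :=
      (Finset.sum_filter_ne_zero _).symm
    have h2 : ∑ i ∈ Finset.univ.filter (fun i => g i ≠ 0), g i
        = ∑ _i ∈ Finset.univ.filter (fun i => g i ≠ 0), (1 : ZMod 2) := by
      apply Finset.sum_congr rfl
      intro i hi
      rcases chi_cases (g i) with h | h
      · exact absurd h (by simpa using hi)
      · exact h
    rw [h1, h2, Finset.sum_const, nsmul_eq_mul, mul_one]
    have : (Finset.univ.filter (fun i => g i ≠ 0)).card = 2*n := hwt_g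
    rw [this]
    push_cast
    rw [show ((2:ZMod 2)) = 0 from by decide]
    ring
  -- ω
  set ω : ℂ := Complex.exp (2 * Real.pi * Complex.I / ((8*n : ℕ) : ℂ)) with hωdef
  have hprim : IsPrimitiveRoot ω (8*n) := Complex.isPrimitiveRoot_exp (8*n) (by omega)
  have hω8 : ω ^ (8*n) = 1 := hprim.pow_eq_one
  have hω4 : ω ^ (4*n) = -1 := by
    have hsq : (ω ^ (4*n)) * (ω ^ (4*n)) = 1 := by
      rw [← pow_add, show 4*n+4*n = 8*n by ring]; exact hω8
    have hne : ω ^ (4*n) ≠ 1 := by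
      intro h
      have := (hprim.pow_eq_one_iff_dvd (4*n)).1 h
      have := Nat.le_of_dvd (by omega) this
      omega
    have hfac : (ω ^ (4*n) - 1) * (ω ^ (4*n) + 1) = 0 := by linear_combination hsq
    rcases mul_eq_zero.1 hfac with h | h
    · exact absurd (by linear_combination h) hne
    · linear_combination h
  -- character sums
  have hsum_char : ∀ v : Fin (4*n) → ZMod 2,
      ∑ i, chi (v i) = ((4*n : ℕ) : ℂ) - 2 * ((hammingNorm v : ℕ) : ℂ) := by
    intro v
    rw [← Finset.sum_filter_add_sum_filter_not Finset.univ (fun i => v i = 0)]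
    have h1 : ∑ i ∈ Finset.univ.filter (fun i => v i = 0), chi (v i)
        = ((Finset.univ.filter (fun i => v i = 0)).card : ℂ) := by
      rw [Finset.sum_congr rfl (fun i hi => by
        rw [(by simpa using hi : v i = 0), chi_zero])]
      simp
    have h2 : ∑ i ∈ Finset.univ.filter (fun i => ¬ v i = 0), chi (v i)
        = -(((Finset.univ.filter (fun i => ¬ v i = 0)).card : ℂ)) := by
      rw [Finset.sum_congr rfl (fun i hi => by
        have hne : v i ≠ 0 := by simpa using hi
        rcases chi_cases (v i) with h | h
        · exact absurd h hne
        · rw [h, chi_one])]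
      simp
    have hcards : (Finset.univ.filter (fun i => v i = 0)).card
        + (Finset.univ.filter (fun i => ¬ v i = 0)).card = 4*n := by
      rw [Finset.card_filter_add_card_filter_not]
      simp
    have hnorm : (Finset.univ.filter (fun i => ¬ v i = 0)).card = hammingNorm v := rfl
    rw [h1, h2, hnorm]
    have hle : hammingNorm v ≤ 4*n := by omega
    have hc0 : (Finset.univ.filter (fun i => v i = 0)).card = 4*n - hammingNorm v := by omega
    rw [hc0, Nat.cast_sub hle]
    ring
  have hnorm_allOnes : hammingNorm (allOnes (4*n)) = 4*n := by
    unfold hammingNorm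
    rw [Finset.filter_true_of_mem (fun i _ => by simp [allOnes])]
    simp
  -- the Fourier-type function
  set F : Fin (4*n) → ℂ := fun i => ∑ m ∈ Finset.range (8*n), chi (S m i) * ω ^ m with hFdef
  have hFsum : ∑ i, F i = ((8*n : ℕ) : ℂ) := by
    rw [hFdef]
    rw [Finset.sum_comm]
    have hterm : ∀ m, ∑ i, chi (S m i) * ω ^ m = (∑ i, chi (S m i)) * ω ^ m := by
      intro m; rw [Finset.sum_mul]
    have h0' : (0:ℕ) ∈ Finset.range (8*n) := by simp; omega
    rw [← Finset.add_sum_erase _ _ h0']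
    have h4' : 4*n ∈ (Finset.range (8*n)).erase 0 := by
      simp only [Finset.mem_erase, Finset.mem_range]
      omega
    rw [← Finset.add_sum_erase _ _ h4']
    have hrest : ∑ m ∈ ((Finset.range (8*n)).erase 0).erase (4*n),
        ∑ i, chi (S m i) * ω ^ m = 0 := by
      apply Finset.sum_eq_zero
      intro m hm
      simp only [Finset.mem_erase, Finset.mem_range] at hm
      rw [hterm, hsum_char, hwt m hm.2.2 hm.2.1 hm.1]
      push_cast
      ring
    rw [hrest]
    rw [hterm, hterm, hsum_char, hsum_char]
    rw [hS0, hS4n, hnorm_allOnes, hω4]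
    have : hammingNorm (0 : Fin (4*n) → ZMod 2) = 0 := by simp
    rw [this]
    push_cast
    ring
  have hFne : ∃ i, F i ≠ 0 := by
    by_contra h
    push_neg at h
    rw [Finset.sum_eq_zero (fun i _ => h i)] at hFsum
    have : (8*n : ℕ) = 0 := by exact_mod_cast hFsum.symm
    omega
  -- the recursion for F
  have hSτ : ∀ m i, S (m+1) (τ i) = g (τ i) + S m i := by
    intro m i
    rw [hSs]
    show g (τ i) + (S m) (τ.symm (τ i)) = g (τ i) + S m i
    rw [Equiv.symm_apply_apply]
  have hR1 : ∀ i, F (τ i) = chi (g (τ i)) * ω * F i := by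
    intro i
    obtain ⟨K, hK⟩ : ∃ K, 8*n = K+1 := ⟨8*n - 1, by omega⟩
    have hlast : chi (g (τ i)) * chi (S K i) = 1 := by
      rw [← chi_add]
      have h1 : S (K+1) (τ i) = g (τ i) + S K i := hSτ K i
      rw [← hK, hS8n] at h1
      rw [← h1]
      exact chi_zero
    have hFi : F i = ∑ m ∈ Finset.range (K+1), chi (S m i) * ω ^ m := by rw [hFdef, hK]
    have hFτ : F (τ i) = ∑ m ∈ Finset.range (K+1), chi (S m (τ i)) * ω ^ m := by rw [hFdef, hK]
    rw [hFτ, hFi, Finset.sum_range_succ' (fun m => chi (S m (τ i)) * ω ^ m) K,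
      Finset.sum_range_succ (fun m => chi (S m i) * ω ^ m) K]
    have hL : ∑ m ∈ Finset.range K, chi (S (m+1) (τ i)) * ω ^ (m+1)
        = ∑ m ∈ Finset.range K, chi (g (τ i)) * ω * (chi (S m i) * ω ^ m) := by
      apply Finset.sum_congr rfl
      intro m _
      rw [hSτ, chi_add]
      ring
    rw [hL, mul_add, Finset.mul_sum]
    congr 1
    rw [hS0]
    show chi 0 * ω ^ 0 = chi (g (τ i)) * ω * (chi (S K i) * ω ^ K)
    rw [chi_zero, pow_zero, mul_one]
    calc (1 : ℂ) = (chi (g (τ i)) * chi (S K i)) * ω ^ (K+1) := by rw [hlast, ← hK, hω8, mul_one]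
    _ = chi (g (τ i)) * ω * (chi (S K i) * ω ^ K) := by rw [pow_succ]; ring
  have hR2 : ∀ k i, F ((τ^k) i)
      = (∏ j ∈ Finset.range k, chi (g ((τ^(j+1)) i))) * ω ^ k * F i := by
    intro k i
    induction k with
    | zero => simp
    | succ k ih =>
      have hτs : (τ^(k+1)) i = τ ((τ^k) i) := by rw [pow_succ']; rfl
      rw [hτs, hR1, ih, Finset.prod_range_succ, ← hτs]
      ring
  obtain ⟨i0, hFi0⟩ := hFne
  -- minimal orbit period
  have horb : ∀ a b, a < b → (τ^a) i0 = (τ^b) i0 → (τ^(b-a)) i0 = i0 := by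
    intro a b hab h
    have h1 : τ^b = τ^a * τ^(b-a) := by rw [← pow_add]; congr 1; omega
    have h2 : (τ^a) ((τ^(b-a)) i0) = (τ^a) i0 := by
      rw [← Equiv.Perm.mul_apply, ← h1]; exact h.symm
    exact (τ^a).injective h2
  have hex2 : ∃ s, (0 < s ∧ s ≤ 4*n) ∧ (τ^s) i0 = i0 := by
    obtain ⟨a, ha, b, hb, hne, heq⟩ := Finset.exists_ne_map_eq_of_card_lt_of_maps_to
      (s := Finset.range (4*n+1)) (t := (Finset.univ : Finset (Fin (4*n))))
      (by simp) (fun m _ => Finset.mem_univ ((τ^m) i0))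
    simp only [Finset.mem_range] at ha hb
    rcases Nat.lt_trichotomy a b with h | h | h
    · exact ⟨b - a, ⟨by omega, by omega⟩, horb a b h heq⟩
    · exact absurd h hne
    · exact ⟨a - b, ⟨by omega, by omega⟩, horb b a h heq.symm⟩
  set s := Nat.find hex2 with hsdef
  obtain ⟨⟨hspos, hsle⟩, hsfix⟩ := Nat.find_spec hex2
  have hkey : (∏ j ∈ Finset.range s, chi (g ((τ^(j+1)) i0))) * ω ^ s = 1 := by
    have h1 := hR2 s i0
    rw [hsfix] at h1
    have h2 : ((∏ j ∈ Finset.range s, chi (g ((τ^(j+1)) i0))) * ω ^ s) * F i0 = 1 * F i0 := by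
      rw [one_mul, ← h1]
    exact mul_right_cancel₀ hFi0 h2
  have hP2 : (∏ j ∈ Finset.range s, chi (g ((τ^(j+1)) i0)))^2 = 1 := by
    rw [← Finset.prod_pow]
    exact Finset.prod_eq_one (fun j _ => by rw [sq]; exact chi_mul_self _)
  have hω2s : ω ^ (2*s) = 1 := by
    have h2 : (((∏ j ∈ Finset.range s, chi (g ((τ^(j+1)) i0))) * ω ^ s))^2 = 1 := by
      rw [hkey]; norm_num
    rw [mul_pow, hP2, one_mul, ← pow_mul] at h2
    rw [show 2*s = s*2 by ring]
    exact h2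
  have hdvd : 8*n ∣ 2*s := (hprim.pow_eq_one_iff_dvd _).1 hω2s
  have hs4n : s = 4*n := by
    obtain ⟨k, hk⟩ := hdvd
    rcases k with _ | _ | k
    · rw [Nat.mul_zero] at hk; omega
    · rw [Nat.mul_one] at hk; omega
    · exfalso
      have h2 : 8*n*2 ≤ 8*n*(k+2) := Nat.mul_le_mul_left _ (by omega)
      rw [← hk] at h2
      omega
  -- the orbit covers all coordinates
  have hinj2 : ∀ a b, a < s → b < s → (τ^(a+1)) i0 = (τ^(b+1)) i0 → a = b := by
    intro a b ha hb h
    rcases Nat.lt_trichotomy a b with h' | h' | h'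
    · exfalso
      have := horb (a+1) (b+1) (by omega) h
      have hlt : (b+1) - (a+1) < s := by omega
      exact Nat.find_min hex2 hlt ⟨⟨by omega, by omega⟩, this⟩
    · exact h'
    · exfalso
      have := horb (b+1) (a+1) (by omega) h.symm
      have hlt : (a+1) - (b+1) < s := by omega
      exact Nat.find_min hex2 hlt ⟨⟨by omega, by omega⟩, this⟩
  have hsurj : ∀ i : Fin (4*n), ∃ j, ∃ _ : j ∈ Finset.range s, (τ^(j+1)) i0 = i := by
    have himg : (Finset.range s).image (fun j => (τ^(j+1)) i0) = Finset.univ := by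
      apply Finset.eq_univ_of_card
      rw [Finset.card_image_of_injOn (fun a ha b hb h =>
        hinj2 a b (by simpa using ha) (by simpa using hb) h)]
      rw [Finset.card_range, hs4n]
      simp
    intro i
    have : i ∈ (Finset.range s).image (fun j => (τ^(j+1)) i0) := by rw [himg]; exact Finset.mem_univ i
    obtain ⟨j, hj, hji⟩ := Finset.mem_image.1 this
    exact ⟨j, hj, hji⟩
  have hprod : ∏ j ∈ Finset.range s, chi (g ((τ^(j+1)) i0)) = ∏ i, chi (g i) := by
    exact Finset.prod_bij (fun j _ => (τ^(j+1)) i0)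
      (fun a _ => Finset.mem_univ _)
      (fun a ha b hb h => hinj2 a b (by simpa using ha) (by simpa using hb) h)
      (fun b _ => hsurj b)
      (fun a _ => rfl)
  have hprodsum : ∀ t : Finset (Fin (4*n)), ∏ i ∈ t, chi (g i) = chi (∑ i ∈ t, g i) := by
    intro t
    induction t using Finset.induction with
    | empty => simp [chi_zero]
    | insert _ _ hnm ih => rw [Finset.prod_insert hnm, Finset.sum_insert hnm, chi_add, ih]
  rw [hprod, hprodsum, hgsum, chi_zero, one_mul, hs4n, hω4] at hkey
  norm_num at hkey
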